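/- Let d be a positive squarefree integer, K = Q(√d) a real quadratic field of discriminant D, and κ(d) its caliber number. If a rational prime p splits in K, then κ(d) > 2·⌊log(√D/2)/log p⌋. -/

import Mathlib

noncomputable section

/-- The binary quadratic form `[A,B,C]` is reduced of discriminant `D`. -/
def IsReducedForm (D A B C : ℤ) : Prop :=
  D = B ^ 2 - 4 * A * C ∧ 0 < A ∧ B < 0 ∧ C < 0 ∧
    ((|B| : ℤ) : ℝ) < Real.sqrt D ∧
    Real.sqrt D - ((|B| : ℤ) : ℝ) < 2 * (A : ℝ) ∧
    2 * (A : ℝ) < Real.sqrt D + ((|B| : ℤ) : ℝ)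

/-- The form `[A,B,C]` is primitive. -/
def IsPrimitiveForm (A B C : ℤ) : Prop := Int.gcd A (Int.gcd B C) = 1

/-- The caliber number: the number of reduced primitive forms of discriminant `D`. -/
def caliber (D : ℤ) : ℕ :=
  Nat.card {f : ℤ × ℤ × ℤ //
    IsReducedForm D f.1 f.2.1 f.2.2 ∧ IsPrimitiveForm f.1 f.2.1 f.2.2}

/-- `rho D A` is the number of classes `[B] ∈ ℤ/2Aℤ` with `B ^ 2 ≡ D (mod 4A)`. -/
def rho (D : ℤ) (A : ℕ) : ℕ :=
  Nat.card {B : ZMod (2 * A) //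
    ∃ b : ℤ, (b : ZMod (2 * A)) = B ∧ (4 * (A : ℤ)) ∣ b ^ 2 - D}

/-- The discriminant of the real quadratic field `ℚ(√d)` for `d` squarefree. -/
def disc (d : ℕ) : ℤ := if d % 4 = 1 then (d : ℤ) else 4 * d

/-- The Kronecker symbol `(D / p)` for a prime `p` (via the Jacobi symbol for odd `p`). -/
def kronecker (D : ℤ) (p : ℕ) : ℤ :=
  if p = 2 then (if D % 8 = 1 then 1 else if D % 8 = 5 then -1 else 0)
  else jacobiSym D p

end

namespace Stmt6Aux

lemma int_coprime_of_prime_not_dvd {p : ℕ} (hp : p.Prime) {b : ℤ} (hpb : ¬ (p : ℤ) ∣ b) :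
    IsCoprime ((p : ℤ)) b := by
  rw [Int.isCoprime_iff_gcd_eq_one]
  have : ¬ p ∣ b.natAbs := fun h => hpb (Int.natAbs_dvd_natAbs.mp (by simpa using h))
  have hco : Nat.Coprime p b.natAbs := (Nat.Prime.coprime_iff_not_dvd hp).mpr this
  simpa [Int.gcd] using hco

lemma nat_not_square {d : ℕ} (hd : Squarefree d) (h1 : 1 < d) (e : ℕ) : d ≠ e * e := by
  intro h
  have := hd e (h ▸ dvd_refl d)
  have he : e = 1 := Nat.isUnit_iff.mp this
  rw [he] at h
  omega

lemma disc_not_square (d : ℕ) (hd : Squarefree d) (h1 : 1 < d) (m : ℤ) :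
    disc d ≠ m ^ 2 := by
  intro h
  unfold disc at h
  have hnat : ∀ dd : ℕ, (dd : ℤ) = m ^ 2 → dd = m.natAbs * m.natAbs := by
    intro dd hdd
    have h2 : ((m.natAbs * m.natAbs : ℕ) : ℤ) = m ^ 2 := by
      rw [Nat.cast_mul, Int.natAbs_mul_self']; ring
    exact_mod_cast hdd.trans h2.symm
  split at h
  · exact nat_not_square hd h1 m.natAbs (hnat d h)
  · have h4 : 4 * d = m.natAbs * m.natAbs := by
      have := hnat (4 * d) (by push_cast; linarith [h])
      simpa using this
    have heven : 2 ∣ m.natAbs := by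
      have : 2 ∣ m.natAbs * m.natAbs := ⟨2 * d, by omega⟩
      exact (Nat.Prime.dvd_mul Nat.prime_two).mp this |>.elim id id
    obtain ⟨e, he⟩ := heven
    rw [he] at h4
    have hcast : (d : ℤ) = (e : ℤ) * e := by
      have := congrArg (Nat.cast : ℕ → ℤ) h4
      push_cast at this
      nlinarith [this]
    exact nat_not_square hd h1 e (by exact_mod_cast hcast)

/-- Hensel step, uniform in p. -/
lemma hensel_step (D : ℤ) (p : ℕ) (hp : p.Prime) (k : ℕ) (hk : 1 ≤ k)
    (b : ℤ) (hb : (4 * (p : ℤ) ^ k) ∣ b ^ 2 - D) (hpb : ¬ (p : ℤ) ∣ b) :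
    ∃ b' : ℤ, (4 * (p : ℤ) ^ (k + 1)) ∣ b' ^ 2 - D ∧ ¬ (p : ℤ) ∣ b' := by
  obtain ⟨j, rfl⟩ : ∃ j, k = j + 1 := ⟨k - 1, by omega⟩
  obtain ⟨m, hm⟩ := hb
  obtain ⟨u, v, huv⟩ := int_coprime_of_prime_not_dvd hp hpb
  set t : ℤ := -m * v with ht
  refine ⟨b + 2 * (p : ℤ) ^ (j + 1) * t, ⟨m * u + (p : ℤ) ^ j * t ^ 2, ?_⟩, ?_⟩
  · have hpow1 : (p : ℤ) ^ (j + 1) = (p : ℤ) ^ j * p := pow_succ _ _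
    have hpow2 : (p : ℤ) ^ (j + 1 + 1) = (p : ℤ) ^ j * p * p := by
      rw [pow_succ, hpow1]
    rw [hpow2]
    rw [hpow1] at hm ⊢
    linear_combination hm + (-4 * ((p:ℤ)^j) * p * m) * huv
  · intro hdvd
    apply hpb
    have h2 : (p : ℤ) ∣ 2 * (p : ℤ) ^ (j + 1) * t := ⟨2 * (p : ℤ) ^ j * t, by ring⟩
    have := hdvd.sub h2
    simpa using this

lemma four_dvd_aux (D b : ℤ) (h4 : D % 4 = 0 ∨ D % 4 = 1) (hpar : (b - D) % 2 = 0) :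
    (4 : ℤ) ∣ b ^ 2 - D := by
  rcases Int.even_or_odd b with ⟨m, hm⟩ | ⟨m, hm⟩
  · have hD4 : (4 : ℤ) ∣ D := by omega
    obtain ⟨e, he⟩ := hD4
    exact ⟨m ^ 2 - e, by rw [hm, he]; ring⟩
  · have hD4 : (4 : ℤ) ∣ 1 - D := by omega
    obtain ⟨e, he⟩ := hD4
    exact ⟨m ^ 2 + m + e, by rw [hm]; linarith [he]⟩

lemma sol_base (D : ℤ) (p : ℕ) (hp : p.Prime)
    (h4 : D % 4 = 0 ∨ D % 4 = 1) (hsplit : kronecker D p = 1) :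
    ∃ b : ℤ, (4 * (p : ℤ) ^ 1) ∣ b ^ 2 - D ∧ ¬ (p : ℤ) ∣ b := by
  unfold kronecker at hsplit
  by_cases h2 : p = 2
  · subst h2
    rw [if_pos rfl] at hsplit
    split_ifs at hsplit with h8 h8'
    · refine ⟨1, ?_, by norm_num⟩
      have h8d : (8 : ℤ) ∣ 1 ^ 2 - D := by omega
      convert h8d using 1
      norm_num
    · exact absurd hsplit (by norm_num)
  · rw [if_neg h2] at hsplit
    haveI : Fact p.Prime := ⟨hp⟩
    have hleg : legendreSym p D = 1 := by
      rw [jacobiSym.legendreSym.to_jacobiSym]; exact hsplit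
    have hD0 : (D : ZMod p) ≠ 0 := by
      intro h
      rw [(legendreSym.eq_zero_iff p D).mpr h] at hleg
      norm_num at hleg
    obtain ⟨c, hc⟩ := (legendreSym.eq_one_iff p hD0).mp hleg
    set c' : ℤ := (c.val : ℤ) with hc'
    have hcc : ((c' : ℤ) : ZMod p) = c := by
      rw [hc']; push_cast [ZMod.natCast_val, ZMod.cast_id]; ring
    have hpc : (p : ℤ) ∣ c' ^ 2 - D := by
      have : ((c' ^ 2 - D : ℤ) : ZMod p) = 0 := by
        push_cast
        rw [hcc, hc]; ring
      exact (ZMod.intCast_zmod_eq_zero_iff_dvd _ p).mp this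
    obtain ⟨q, hq⟩ : Odd p := hp.odd_of_ne_two h2
    have hq' : (p : ℤ) = 2 * q + 1 := by exact_mod_cast hq
    set b : ℤ := c' + p * (c' + D) with hb
    have hpar : (b - D) % 2 = 0 := by
      have : b - D = 2 * (c' + (q : ℤ) * (c' + D)) := by rw [hb, hq']; ring
      omega
    have h4dvd : (4 : ℤ) ∣ b ^ 2 - D := four_dvd_aux D b h4 hpar
    have hpdvd : (p : ℤ) ∣ b ^ 2 - D := by
      have h2' : (p : ℤ) ∣ b ^ 2 - c' ^ 2 := ⟨(c' + D) * (b + c'), by rw [hb]; ring⟩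
      have heq : b ^ 2 - D = (b ^ 2 - c' ^ 2) + (c' ^ 2 - D) := by ring
      rw [heq]; exact dvd_add h2' hpc
    have hcop : IsCoprime (4 : ℤ) ((p : ℤ)) := by
      have h2p : IsCoprime (2 : ℤ) ((p : ℤ)) := by
        rw [Int.isCoprime_iff_gcd_eq_one]
        have : Nat.Coprime 2 p := Nat.coprime_two_left.mpr ⟨q, hq⟩
        simpa [Int.gcd] using this
      have h4p : IsCoprime ((2 : ℤ) ^ 2) ((p : ℤ)) := h2p.pow_left
      norm_num at h4p
      exact h4p
    refine ⟨b, ?_, ?_⟩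
    · rw [pow_one]
      exact hcop.mul_dvd h4dvd hpdvd
    · intro hdvd
      have hc'dvd : (p : ℤ) ∣ c' := by
        have hpp : (p : ℤ) ∣ (p : ℤ) * (c' + D) := Dvd.intro _ rfl
        have := hdvd.sub hpp
        simpa [hb] using this
      have hD : (p : ℤ) ∣ D := by
        have hsq : (p : ℤ) ∣ c' ^ 2 := by
          have := hc'dvd.mul_left c'
          simpa [sq] using this
        have := hsq.sub hpc
        simpa using this
      exact hD0 ((ZMod.intCast_zmod_eq_zero_iff_dvd _ p).mpr hD)

lemma window (D : ℤ) (hns : ∀ m : ℤ, D ≠ m ^ 2) (hD : 0 < D) (mo r : ℤ) (hm : 0 < mo) :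
    ∃ b : ℤ, mo ∣ (b - r) ∧ Real.sqrt D - mo < b ∧ (b : ℝ) < Real.sqrt D := by
  set x := Real.sqrt D with hx
  have hmo : (0 : ℝ) < mo := by exact_mod_cast hm
  set t := ⌊(x - r) / (mo : ℝ)⌋ with htd
  refine ⟨r + mo * t, ⟨t, by ring⟩, ?_, ?_⟩
  · have h2 : (x - r) / mo < t + 1 := Int.lt_floor_add_one _
    have h2' : x - r < mo * (t + 1) := by
      rw [mul_comm]
      exact (div_lt_iff₀ hmo).mp h2
    push_cast
    linarith
  · have h1 : (t : ℝ) ≤ (x - r) / mo := Int.floor_le _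
    have h1' : (mo : ℝ) * t ≤ x - r := by
      rw [mul_comm]
      exact (le_div_iff₀ hmo).mp h1
    have hle : ((r + mo * t : ℤ) : ℝ) ≤ x := by push_cast; linarith
    rcases lt_or_eq_of_le hle with h | h
    · exact h
    · exfalso
      apply hns (r + mo * t)
      have hxnn : (0 : ℝ) ≤ (D : ℝ) := by exact_mod_cast hD.le
      have : ((r + mo * t : ℤ) : ℝ) ^ 2 = (D : ℝ) := by
        rw [h, hx, Real.sq_sqrt hxnn]
      exact_mod_cast this.symm

lemma mk_form (D A r : ℤ) (hns : ∀ m : ℤ, D ≠ m ^ 2) (hA : 0 < A)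
    (hbound : 4 * A ^ 2 < D) (hsol : (4 * A) ∣ r ^ 2 - D) :
    ∃ b : ℤ, (2 * A) ∣ (b - r) ∧ 0 < b ∧
      IsReducedForm D A (-b) ((b ^ 2 - D) / (4 * A)) := by
  have hD0 : (0 : ℤ) < D := by nlinarith
  obtain ⟨b, hbcl, hb1, hb2⟩ := window D hns hD0 (2 * A) r (by positivity)
  have hDnn : (0 : ℝ) ≤ (D : ℝ) := by exact_mod_cast hD0.le
  have hsqD : Real.sqrt D ^ 2 = (D : ℝ) := Real.sq_sqrt hDnn
  have h2A : 2 * (A : ℝ) < Real.sqrt D := by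
    rw [show (2 * (A : ℝ)) = ((2 * A : ℤ) : ℝ) by push_cast; ring]
    rw [show Real.sqrt D = Real.sqrt D from rfl]
    have hZ : (2 * A) ^ 2 < D := by nlinarith
    have : ((2 * A : ℤ) : ℝ) ^ 2 < (D : ℝ) := by exact_mod_cast hZ
    nlinarith [Real.sqrt_nonneg (D : ℝ), hsqD, this,
      abs_nonneg ((2 * A : ℤ) : ℝ)]
  have hb0R : (0 : ℝ) < (b : ℝ) := by
    have := hb1
    push_cast at this ⊢
    linarith
  have hb0 : 0 < b := by exact_mod_cast hb0R
  have hdvd : (4 * A) ∣ b ^ 2 - D := by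
    obtain ⟨s, hs⟩ := hbcl
    have h1 : (4 * A) ∣ b ^ 2 - r ^ 2 :=
      ⟨s * (r + A * s), by linear_combination (b + r + 2 * A * s) * hs⟩
    have heq : b ^ 2 - D = (b ^ 2 - r ^ 2) + (r ^ 2 - D) := by ring
    rw [heq]; exact dvd_add h1 hsol
  set c := (b ^ 2 - D) / (4 * A) with hcdef
  have hc : 4 * A * c = b ^ 2 - D := Int.mul_ediv_cancel' hdvd
  have hblt : b ^ 2 < D := by
    have : ((b : ℝ)) ^ 2 < (D : ℝ) := by nlinarith [hb2, hb0R, hsqD, Real.sqrt_nonneg (D : ℝ)]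
    exact_mod_cast this
  have hcneg : c < 0 := by nlinarith
  refine ⟨b, hbcl, hb0, ?_, hA, by omega, hcneg, ?_, ?_, ?_⟩
  · linarith [hc]
  · rw [show |(-b)| = b from by rw [abs_neg, abs_of_pos hb0]]
    exact hb2
  · rw [show |(-b)| = b from by rw [abs_neg, abs_of_pos hb0]]
    push_cast at hb1 ⊢
    linarith
  · rw [show |(-b)| = b from by rw [abs_neg, abs_of_pos hb0]]
    linarith

lemma finite_forms (D : ℤ) (hD : 0 < D) :
    {f : ℤ × ℤ × ℤ | IsReducedForm D f.1 f.2.1 f.2.2 ∧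
      IsPrimitiveForm f.1 f.2.1 f.2.2}.Finite := by
  apply Set.Finite.subset (Set.finite_Icc ((1 : ℤ), (-D : ℤ), (-D : ℤ)) ((D : ℤ), (-1 : ℤ), (-1 : ℤ)))
  rintro ⟨A, B, C⟩ ⟨⟨hDf, hA, hB, hC, habs, hr1, hr2⟩, -⟩
  dsimp only at hDf hA hB hC habs hr1 hr2
  have hDnn : (0 : ℝ) ≤ (D : ℝ) := by exact_mod_cast hD.le
  have hsqD : Real.sqrt D ^ 2 = (D : ℝ) := Real.sq_sqrt hDnn
  have h1D : (1 : ℝ) ≤ Real.sqrt D := by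
    rw [show (1 : ℝ) = Real.sqrt 1 from (Real.sqrt_one).symm]
    exact Real.sqrt_le_sqrt (by exact_mod_cast hD)
  have hsqle : Real.sqrt D ≤ (D : ℝ) := by nlinarith [hsqD, h1D]
  have hAD : A ≤ D := by
    have : (A : ℝ) < (D : ℝ) := by linarith
    exact_mod_cast this.le
  have hBabs : |B| ≤ D := by
    have : ((|B| : ℤ) : ℝ) < (D : ℝ) := by linarith
    exact_mod_cast this.le
  have hBl := abs_le.mp hBabs
  have hCD : -D ≤ C := by nlinarith [sq_nonneg B]
  simp only [Set.mem_Icc, Prod.le_def]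
  exact ⟨⟨by omega, by omega, by omega⟩, ⟨by omega, by omega, by omega⟩⟩

lemma disc_five_le (d : ℕ) (h1 : 1 < d) : 5 ≤ disc d := by
  unfold disc
  split <;> omega

lemma disc_mod4 (d : ℕ) (h1 : 1 < d) : disc d % 4 = 0 ∨ disc d % 4 = 1 := by
  unfold disc
  split <;> omega

lemma sol (D : ℤ) (p : ℕ) (hp : p.Prime)
    (h4 : D % 4 = 0 ∨ D % 4 = 1) (hsplit : kronecker D p = 1) :
    ∀ k : ℕ, 1 ≤ k → ∃ b : ℤ, (4 * (p : ℤ) ^ k) ∣ b ^ 2 - D ∧ ¬ (p : ℤ) ∣ b := by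
  intro k hk
  induction k with
  | zero => omega
  | succ m ih =>
    rcases Nat.eq_or_lt_of_le hk with h | h
    · exact h ▸ sol_base D p hp h4 hsplit
    · have hm : 1 ≤ m := by omega
      obtain ⟨b, hb, hpb⟩ := ih hm
      exact hensel_step D p hp m hm b hb hpb

end Stmt6Aux

theorem stmt6 (d : ℕ) (hd : Squarefree d) (h1 : 1 < d)
    (p : ℕ) (hp : p.Prime) (hsplit : kronecker (disc d) p = 1) :
    2 * ⌊Real.log (Real.sqrt (disc d) / 2) / Real.log p⌋ < (caliber (disc d) : ℤ) := by
  classical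
  have hD5 : 5 ≤ disc d := Stmt6Aux.disc_five_le d h1
  have hD4 := Stmt6Aux.disc_mod4 d h1
  have hns := Stmt6Aux.disc_not_square d hd h1
  set D := disc d with hDdef
  have hD0 : (0 : ℤ) < D := by omega
  have hp2 : 2 ≤ p := hp.two_le
  have hDnnR : (0 : ℝ) ≤ (D : ℝ) := by exact_mod_cast hD0.le
  have hsqD : Real.sqrt D ^ 2 = (D : ℝ) := Real.sq_sqrt hDnnR
  have h2sq : (2 : ℝ) ≤ Real.sqrt D := by
    nlinarith [Real.sqrt_nonneg (D : ℝ), hsqD, (by exact_mod_cast hD5 : (5 : ℝ) ≤ (D : ℝ))]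
  set n : ℤ := ⌊Real.log (Real.sqrt D / 2) / Real.log p⌋ with hndef
  have hlogp : 0 < Real.log p := Real.log_pos (by exact_mod_cast hp2)
  have hn0 : 0 ≤ n :=
    Int.floor_nonneg.mpr (div_nonneg (Real.log_nonneg (by linarith)) hlogp.le)
  have hbound : ∀ k : ℕ, (k : ℤ) ≤ n → 4 * ((p : ℤ) ^ k) ^ 2 < D := by
    intro k hk
    have hk' : (((k : ℤ)) : ℝ) ≤ Real.log (Real.sqrt D / 2) / Real.log p :=
      Int.le_floor.mp hk
    have hkR : (k : ℝ) * Real.log p ≤ Real.log (Real.sqrt D / 2) := by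
      have h := (le_div_iff₀ hlogp).mp (by exact_mod_cast hk')
      linarith
    have hple : ((p : ℝ)) ^ k ≤ Real.sqrt D / 2 := by
      have hx : (0 : ℝ) < (p : ℝ) ^ k := by positivity
      have hy : (0 : ℝ) < Real.sqrt D / 2 := by linarith
      have hlog : Real.log ((p : ℝ) ^ k) ≤ Real.log (Real.sqrt D / 2) := by
        rw [Real.log_pow]; exact_mod_cast hkR
      have h := Real.exp_le_exp.mpr hlog
      rwa [Real.exp_log hx, Real.exp_log hy] at h
    have hsq : 4 * ((p : ℝ) ^ k) ^ 2 ≤ (D : ℝ) := by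
      nlinarith [Real.sqrt_nonneg (D : ℝ), hsqD, hple, (by positivity : (0 : ℝ) < (p : ℝ) ^ k)]
    have hle : 4 * ((p : ℤ) ^ k) ^ 2 ≤ D := by exact_mod_cast hsq
    rcases lt_or_eq_of_le hle with h | h
    · exact h
    · exact absurd (by linear_combination -h : D = (2 * (p : ℤ) ^ k) ^ 2) (hns _)
  have hsolk := Stmt6Aux.sol D p hp hD4 hsplit
  have hsol' : ∀ k : ℕ, ∃ b : ℤ, 1 ≤ k → ((4 * (p : ℤ) ^ k ∣ b ^ 2 - D) ∧ ¬ (p : ℤ) ∣ b) := by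
    intro k
    by_cases h : 1 ≤ k
    · obtain ⟨b, hb⟩ := hsolk k h
      exact ⟨b, fun _ => hb⟩
    · exact ⟨0, fun h' => absurd h' h⟩
  choose bb hbb using hsol'
  have hmk : ∀ q : ℕ × Bool, ∃ b : ℤ, (1 ≤ q.1 ∧ (q.1 : ℤ) ≤ n) →
      ((2 * (p : ℤ) ^ q.1) ∣ (b - (if q.2 then bb q.1 else -(bb q.1))) ∧ 0 < b ∧
       IsReducedForm D ((p : ℤ) ^ q.1) (-b) ((b ^ 2 - D) / (4 * (p : ℤ) ^ q.1))) := by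
    rintro ⟨k, s⟩
    by_cases h : 1 ≤ k ∧ (k : ℤ) ≤ n
    · obtain ⟨hdvd, hnd⟩ := hbb k h.1
      have hr : (4 * (p : ℤ) ^ k) ∣ (if s then bb k else -(bb k)) ^ 2 - D := by
        cases s <;> simpa using hdvd
      obtain ⟨b, hb1, hb2, hb3⟩ := Stmt6Aux.mk_form D ((p : ℤ) ^ k) _ hns
        (by positivity) (hbound k h.2) hr
      exact ⟨b, fun _ => ⟨hb1, hb2, hb3⟩⟩
    · exact ⟨0, fun h' => absurd h' h⟩
  choose bf hbf using hmk
  obtain ⟨b0, hb0cl, hb0pos, hb0red⟩ := Stmt6Aux.mk_form D 1 D hns one_pos (by omega)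
    (by simpa using Stmt6Aux.four_dvd_aux D D hD4 (by omega))
  set n' : ℕ := n.toNat with hn'def
  have hn' : (n' : ℤ) = n := Int.toNat_of_nonneg hn0
  set F : ℕ × Bool → ℤ × ℤ × ℤ := fun q =>
    ((p : ℤ) ^ q.1, -(bf q), ((bf q) ^ 2 - D) / (4 * (p : ℤ) ^ q.1)) with hFdef
  set f0 : ℤ × ℤ × ℤ := ((1 : ℤ), -b0, (b0 ^ 2 - D) / (4 * 1)) with hf0def
  set S : Set (ℤ × ℤ × ℤ) := {f | IsReducedForm D f.1 f.2.1 f.2.2 ∧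
    IsPrimitiveForm f.1 f.2.1 f.2.2} with hSdef
  set T : Finset (ℤ × ℤ × ℤ) :=
    insert f0 ((Finset.Icc 1 n' ×ˢ (Finset.univ : Finset Bool)).image F) with hTdef
  -- p does not divide bf q for valid q
  have hpnd : ∀ q : ℕ × Bool, 1 ≤ q.1 → (q.1 : ℤ) ≤ n → ¬ (p : ℤ) ∣ bf q := by
    rintro ⟨k, s⟩ hk1 hk2 hdvd
    obtain ⟨hcl, hpos, hred⟩ := hbf (k, s) ⟨hk1, hk2⟩
    have hpk : (p : ℤ) ∣ 2 * (p : ℤ) ^ k := Dvd.dvd.mul_left (dvd_pow_self _ (by omega)) 2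
    have hr : (p : ℤ) ∣ (if s then bb k else -(bb k)) := by
      have h := hdvd.sub (hpk.trans hcl)
      simpa using h
    have : (p : ℤ) ∣ bb k := by
      cases s
      · simpa using hr.neg_right
      · simpa using hr
    exact (hbb k hk1).2 this
  -- T ⊆ S
  have hsub : (T : Set (ℤ × ℤ × ℤ)) ⊆ S := by
    intro x hx
    simp only [hTdef, Finset.coe_insert, Set.mem_insert_iff, Finset.coe_image,
      Set.mem_image, Finset.mem_coe, Finset.mem_product, Finset.mem_Icc] at hx
    rcases hx with rfl | ⟨⟨k, s⟩, ⟨⟨hk1, hk2⟩, -⟩, rfl⟩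
    · constructor
      · exact hb0red
      · simp [IsPrimitiveForm, Int.gcd, hf0def]
    · have hkn : (k : ℤ) ≤ n := by rw [← hn']; exact_mod_cast hk2
      obtain ⟨hcl, hpos, hred⟩ := hbf (k, s) ⟨hk1, hkn⟩
      refine ⟨hred, ?_⟩
      unfold IsPrimitiveForm
      set g : ℕ := Int.gcd (-(bf (k, s))) (((bf (k, s)) ^ 2 - D) / (4 * (p : ℤ) ^ k)) with hgdef
      have hpg : ¬ p ∣ g := by
        intro hpg
        have h1 : (p : ℤ) ∣ (g : ℤ) := Int.natCast_dvd_natCast.mpr hpg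
        have h2 : ((g : ℤ)) ∣ -(bf (k, s)) := Int.gcd_dvd_left _ _
        have := (h1.trans h2).neg_right
        simp only [neg_neg] at this
        exact hpnd (k, s) hk1 hkn this
      have hco : Nat.Coprime (p ^ k) g := Nat.Coprime.pow_left k (hp.coprime_iff_not_dvd.mpr hpg)
      have : Int.gcd ((p : ℤ) ^ k) ((g : ℕ) : ℤ) = Nat.gcd (p ^ k) g := by
        simp [Int.gcd, Int.natAbs_pow]
      rw [this]
      exact hco
  -- injectivity
  have hinj : Set.InjOn F (↑(Finset.Icc 1 n' ×ˢ (Finset.univ : Finset Bool)) : Set (ℕ × Bool)) := by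
    rintro ⟨k, s⟩ hks ⟨k', s'⟩ hks' heq
    simp only [Finset.coe_product, Finset.mem_coe, Set.mem_prod, Finset.mem_Icc,
      Finset.coe_Icc, Set.mem_Icc] at hks hks'
    have hk1 : 1 ≤ k := hks.1.1
    have hk2 : (k : ℤ) ≤ n := by rw [← hn']; exact_mod_cast hks.1.2
    have hk1' : 1 ≤ k' := hks'.1.1
    have hk2' : (k' : ℤ) ≤ n := by rw [← hn']; exact_mod_cast hks'.1.2
    have h1 : (p : ℤ) ^ k = (p : ℤ) ^ k' := congrArg Prod.fst heq
    have hkk : k = k' := by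
      have : (p : ℕ) ^ k = (p : ℕ) ^ k' := by exact_mod_cast h1
      exact Nat.pow_right_injective hp2 this
    subst hkk
    have h2 : bf (k, s) = bf (k, s') := by
      have := congrArg (fun x => x.2.1) heq
      simpa [hFdef] using this
    by_contra hne
    have hss : s ≠ s' := fun h => hne (by rw [h])
    obtain ⟨hcl, -, -⟩ := hbf (k, s) ⟨hk1, hk2⟩
    obtain ⟨hcl', -, -⟩ := hbf (k, s') ⟨hk1, hk2⟩
    rw [h2] at hcl
    have hdiff : (2 * (p : ℤ) ^ k) ∣
        ((if s' then bb k else -(bb k)) - (if s then bb k else -(bb k))) := by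
      have h := hcl.sub hcl'
      have e : (bf (k, s') - (if s then bb k else -(bb k))) -
          (bf (k, s') - (if s' then bb k else -(bb k))) =
          ((if s' then bb k else -(bb k)) - (if s then bb k else -(bb k))) := by ring
      rwa [e] at h
    have h2bb : (2 * (p : ℤ) ^ k) ∣ 2 * bb k := by
      cases s <;> cases s'
      · exact absurd rfl hss
      · simp only [if_true, if_false, Bool.false_eq_true] at hdiff
        rw [two_mul (bb k)]
        simpa [sub_neg_eq_add] using hdiff
      · simp only [if_true, if_false, Bool.false_eq_true] at hdiff
        rw [two_mul (bb k)]
        have h := hdiff.neg_right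
        simpa [sub_neg_eq_add] using h
      · exact absurd rfl hss
    have hpkbb : (p : ℤ) ^ k ∣ bb k :=
      (mul_dvd_mul_iff_left (by norm_num : (2 : ℤ) ≠ 0)).mp h2bb
    have : (p : ℤ) ∣ bb k := (dvd_pow_self (p : ℤ) (by omega : k ≠ 0)).trans hpkbb
    exact (hbb k hk1).2 this
  have hf0not : f0 ∉ (Finset.Icc 1 n' ×ˢ (Finset.univ : Finset Bool)).image F := by
    intro hmem
    obtain ⟨⟨k, s⟩, hq, hFq⟩ := Finset.mem_image.mp hmem
    have hk1 : 1 ≤ k := (Finset.mem_Icc.mp (Finset.mem_product.mp hq).1).1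
    have h1 : (p : ℤ) ^ k = 1 := by
      have := congrArg Prod.fst hFq
      simpa [hf0def] using this
    have : (2 : ℤ) ≤ (p : ℤ) ^ k := by
      have : 2 ≤ p ^ k := by
        calc 2 ≤ p := hp2
        _ = p ^ 1 := (pow_one p).symm
        _ ≤ p ^ k := Nat.pow_le_pow_right (by omega) hk1
      exact_mod_cast this
    omega
  have hTcard : T.card = 2 * n' + 1 := by
    rw [hTdef, Finset.card_insert_of_notMem hf0not,
      Finset.card_image_of_injOn hinj, Finset.card_product, Nat.card_Icc,
      Finset.card_univ]
    simp [Fintype.card_bool]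
    omega
  have hfin := Stmt6Aux.finite_forms D hD0
  have hcard : T.card ≤ S.ncard := by
    rw [← Set.ncard_coe_finset]
    exact Set.ncard_le_ncard hsub hfin
  have hcal : caliber D = S.ncard := by
    rw [← Nat.card_coe_set_eq]
    rfl
  have hfinal : 2 * n' + 1 ≤ caliber D := by
    rw [hcal]; omega
  have : (2 * (n' : ℤ) + 1 : ℤ) ≤ (caliber D : ℤ) := by exact_mod_cast hfinal
  rw [hn'] at this
  omega
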